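/- For any integer k > 0, any function f: ℕ → ℕ, and any real γ > 0, there exists T = T(k, f, γ) such that for every equipartition C of a Σ-colored graph G with |C| = k, there exists an (f, γ)-robust equipartition C' refining C with |C'| ≤ T. Moreover T can be taken so that the robustification process terminates after at most 1/γ refinement steps. -/
import Mathlib


open Finset

noncomputable def dens {V C : Type*} [DecidableEq V] [DecidableEq C]
    (c : V → V → C) (σ : C) (A B : Finset V) : ℝ :=
  (((A ×ˢ B).filter (fun p => c p.1 p.2 = σ)).card : ℝ) / ((A.card : ℝ) * (B.card : ℝ))

noncomputable def indPair {V C : Type*} [DecidableEq V] [Fintype C] [DecidableEq C]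
    (c : V → V → C) (A B : Finset V) : ℝ :=
  ∑ σ : C, (dens c σ A B) ^ 2

noncomputable def indPart {V C : Type*} [Fintype V] [DecidableEq V] [Fintype C] [DecidableEq C]
    (c : V → V → C) {k : ℕ} (P : Fin k → Finset V) : ℝ :=
  ∑ p ∈ univ.filter (fun p : Fin k × Fin k => p.1 < p.2),
    (((P p.1).card : ℝ) * ((P p.2).card : ℝ) / ((Fintype.card V).choose 2 : ℝ))
      * indPair c (P p.1) (P p.2)

def IsPartition {V : Type*} [Fintype V] [DecidableEq V] {k : ℕ} (P : Fin k → Finset V) : Prop :=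
  (∀ i j, i ≠ j → Disjoint (P i) (P j)) ∧ (∀ v : V, ∃ i, v ∈ P i)

/-- An equipartition: all parts have sizes differing by at most 1. -/
def IsEquipartition' {V : Type*} {k : ℕ} (P : Fin k → Finset V) : Prop :=
  ∀ i j, (P i).card ≤ (P j).card + 1

def Refines {V : Type*} {k k' : ℕ} (P' : Fin k' → Finset V) (P : Fin k → Finset V) : Prop :=
  ∀ j, ∃ i, P' j ⊆ P i

/-- An equipartition `P` of size `k` is `(f, γ)`-robust if no refining equipartition of
size at most `f(k)` has index exceeding `ind(P) + γ`. -/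
def IsRobust {V C : Type*} [Fintype V] [DecidableEq V] [Fintype C] [DecidableEq C]
    (c : V → V → C) (f : ℕ → ℕ) (γ : ℝ) {k : ℕ} (P : Fin k → Finset V) : Prop :=
  ∀ (k' : ℕ) (P' : Fin k' → Finset V),
    IsPartition P' → IsEquipartition' P' → Refines P' P → k' ≤ f k →
    indPart c P' ≤ indPart c P + γ


lemma sq_sum_eq {k : ℕ} (a : Fin k → ℝ) :
    (∑ i, a i) ^ 2 =
      2 * ∑ p ∈ univ.filter (fun p : Fin k × Fin k => p.1 < p.2), a p.1 * a p.2
        + ∑ i, a i ^ 2 := by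
  classical
  have h0 : (∑ i, a i) ^ 2 = ∑ p : Fin k × Fin k, a p.1 * a p.2 := by
    rw [sq, Finset.sum_mul_sum, ← Finset.sum_product']
    rw [Finset.univ_product_univ]
  have h1 := Finset.sum_filter_add_sum_filter_not (univ : Finset (Fin k × Fin k))
      (fun p => p.1 < p.2) (fun p => a p.1 * a p.2)
  have h2 := Finset.sum_filter_add_sum_filter_not
      (univ.filter (fun p : Fin k × Fin k => ¬ p.1 < p.2))
      (fun p => p.2 < p.1) (fun p => a p.1 * a p.2)
  have e1 : (univ.filter (fun p : Fin k × Fin k => ¬ p.1 < p.2)).filter (fun p => p.2 < p.1)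
      = univ.filter (fun p : Fin k × Fin k => p.2 < p.1) := by
    rw [Finset.filter_filter]
    apply Finset.filter_congr
    intro p _
    constructor
    · exact fun h => h.2
    · exact fun h => ⟨asymm h, h⟩
  have e2 : (univ.filter (fun p : Fin k × Fin k => ¬ p.1 < p.2)).filter (fun p => ¬ p.2 < p.1)
      = univ.filter (fun p : Fin k × Fin k => p.1 = p.2) := by
    rw [Finset.filter_filter]
    apply Finset.filter_congr
    intro p _
    constructor
    · rintro ⟨hA, hB⟩; exact le_antisymm (not_lt.1 hB) (not_lt.1 hA)
    · rintro h; exact ⟨by simp [h], by simp [h]⟩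
  have hswap : ∑ p ∈ univ.filter (fun p : Fin k × Fin k => p.2 < p.1), a p.1 * a p.2
      = ∑ p ∈ univ.filter (fun p : Fin k × Fin k => p.1 < p.2), a p.1 * a p.2 := by
    apply Finset.sum_nbij' (i := Prod.swap) (j := Prod.swap)
    · intro p hp; simp at hp ⊢; exact hp
    · intro p hp; simp at hp ⊢; exact hp
    · intro p _; simp
    · intro p _; simp
    · intro p _; simp [mul_comm]
  have hdiag : ∑ p ∈ univ.filter (fun p : Fin k × Fin k => p.1 = p.2), a p.1 * a p.2
      = ∑ i, a i ^ 2 := by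
    apply Finset.sum_nbij' (i := fun p => p.1) (j := fun i => (i, i))
    · intro p _; simp
    · intro i _; simp
    · intro p hp; simp at hp; ext <;> simp [hp]
    · intro i _; rfl
    · intro p hp; simp at hp; rw [sq, hp]
  rw [e1, e2, hswap, hdiag] at h2
  rw [h0, ← h1, ← h2]
  ring


lemma dens_nonneg {V C : Type*} [DecidableEq V] [DecidableEq C]
    (c : V → V → C) (σ : C) (A B : Finset V) : 0 ≤ _root_.dens c σ A B := by
  unfold _root_.dens
  positivity

lemma dens_le_one {V C : Type*} [DecidableEq V] [DecidableEq C]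
    (c : V → V → C) (σ : C) (A B : Finset V) : _root_.dens c σ A B ≤ 1 := by
  unfold _root_.dens
  by_cases h : (A.card : ℝ) * B.card = 0
  · rw [h, div_zero]; norm_num
  · rw [div_le_one (lt_of_le_of_ne (by positivity) (Ne.symm h))]
    calc (((A ×ˢ B).filter (fun p => c p.1 p.2 = σ)).card : ℝ)
        ≤ ((A ×ˢ B).card : ℝ) := by
          exact_mod_cast Finset.card_le_card (Finset.filter_subset _ _)
      _ = (A.card : ℝ) * B.card := by rw [Finset.card_product]; push_cast; ring

lemma sum_dens_le_one {V C : Type*} [DecidableEq V] [Fintype C] [DecidableEq C]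
    (c : V → V → C) (A B : Finset V) : ∑ σ : C, _root_.dens c σ A B ≤ 1 := by
  unfold _root_.dens
  rw [← Finset.sum_div]
  have hcount : ∑ σ : C, ((((A ×ˢ B).filter (fun p => c p.1 p.2 = σ)).card : ℝ))
      = ((A ×ˢ B).card : ℝ) := by
    rw [← Nat.cast_sum]
    congr 1
    exact (Finset.card_eq_sum_card_fiberwise (fun p _ => Finset.mem_univ (c p.1 p.2))).symm
  rw [hcount, Finset.card_product]
  push_cast
  by_cases hA : (A.card : ℝ) * B.card = 0
  · rw [hA]; simp
  · rw [div_le_one (lt_of_le_of_ne (by positivity) (Ne.symm hA))]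

lemma indPair_nonneg {V C : Type*} [DecidableEq V] [Fintype C] [DecidableEq C]
    (c : V → V → C) (A B : Finset V) : 0 ≤ indPair c A B :=
  Finset.sum_nonneg fun σ _ => sq_nonneg _

lemma indPair_le_one {V C : Type*} [DecidableEq V] [Fintype C] [DecidableEq C]
    (c : V → V → C) (A B : Finset V) : indPair c A B ≤ 1 := by
  unfold indPair
  calc ∑ σ : C, _root_.dens c σ A B ^ 2 ≤ ∑ σ : C, _root_.dens c σ A B := by
        apply Finset.sum_le_sum
        intro σ _
        have h1 := dens_nonneg c σ A B
        have h2 := dens_le_one c σ A B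
        nlinarith
    _ ≤ 1 := sum_dens_le_one c A B

lemma indPart_nonneg {V C : Type*} [Fintype V] [DecidableEq V] [Fintype C] [DecidableEq C]
    (c : V → V → C) {k : ℕ} (P : Fin k → Finset V) : 0 ≤ indPart c P := by
  apply Finset.sum_nonneg
  intro p _
  have := indPair_nonneg c (P p.1) (P p.2)
  positivity

lemma sum_card_le {V : Type*} [Fintype V] [DecidableEq V] {k : ℕ} (P : Fin k → Finset V)
    (hP : ∀ i j, i ≠ j → Disjoint (P i) (P j)) :
    ∑ i, (P i).card ≤ Fintype.card V := by
  rw [← Finset.card_biUnion (fun i _ j _ hij => hP i j hij)]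
  exact Finset.card_le_univ _

lemma indPart_le_one {V C : Type*} [Fintype V] [DecidableEq V] [Fintype C] [DecidableEq C]
    (c : V → V → C) {k : ℕ} (P : Fin k → Finset V)
    (hP : ∀ i j, i ≠ j → Disjoint (P i) (P j)) : indPart c P ≤ 1 := by
  unfold indPart
  set n := Fintype.card V with hn
  by_cases hm : (n.choose 2 : ℝ) = 0
  · rw [hm]
    simp only [div_zero, zero_mul]
    simp
  · have hmpos : (0:ℝ) < (n.choose 2 : ℝ) := lt_of_le_of_ne (by positivity) (Ne.symm hm)
    have hn2 : 2 ≤ n := by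
      by_contra h
      push_neg at h
      apply hm
      rw [Nat.choose_eq_zero_of_lt h]
      norm_num
    calc ∑ p ∈ univ.filter (fun p : Fin k × Fin k => p.1 < p.2),
          (((P p.1).card : ℝ) * ((P p.2).card : ℝ) / (n.choose 2 : ℝ)) * indPair c (P p.1) (P p.2)
        ≤ ∑ p ∈ univ.filter (fun p : Fin k × Fin k => p.1 < p.2),
          (((P p.1).card : ℝ) * ((P p.2).card : ℝ) / (n.choose 2 : ℝ)) := by
          apply Finset.sum_le_sum
          intro p _
          have h1 := indPair_le_one c (P p.1) (P p.2)
          have h2 : (0:ℝ) ≤ ((P p.1).card : ℝ) * ((P p.2).card : ℝ) / (n.choose 2 : ℝ) := by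
            positivity
          nlinarith [indPair_nonneg c (P p.1) (P p.2)]
      _ ≤ 1 := by
          rw [← Finset.sum_div, div_le_one hmpos]
          set a : Fin k → ℝ := fun i => ((P i).card : ℝ) with ha
          have key := sq_sum_eq a
          have hq : ∑ i, a i ≤ ∑ i, a i ^ 2 := by
            apply Finset.sum_le_sum
            intro i _
            have : (1:ℝ) ≤ a i ∨ a i = 0 := by
              rcases Nat.eq_zero_or_pos (P i).card with h | h
              · right; simp [ha, h]
              · left; show (1:ℝ) ≤ ((P i).card : ℝ); exact_mod_cast Nat.succ_le_of_lt h
            rcases this with h | h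
            · nlinarith
            · simp [h]
          have hs : ∑ i, a i ≤ (n : ℝ) := by
            have := sum_card_le P hP
            calc ∑ i, a i = ((∑ i, (P i).card : ℕ) : ℝ) := by push_cast [ha]; ring_nf
              _ ≤ (n : ℝ) := by exact_mod_cast this
          have hs0 : (0:ℝ) ≤ ∑ i, a i := Finset.sum_nonneg fun i _ => by positivity
          have hch : (n.choose 2 : ℝ) = n * (n - 1) / 2 := Nat.cast_choose_two (K := ℝ) n
          have hn2' : (2:ℝ) ≤ (n:ℝ) := by exact_mod_cast hn2
          nlinarith [mul_nonneg (sub_nonneg.2 hs) (show (0:ℝ) ≤ (n:ℝ) + (∑ i, a i) - 1 by linarith)]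

/-- A monotone majorant of `f` that also dominates the identity. -/
def Fmaj (f : ℕ → ℕ) (n : ℕ) : ℕ := max n ((Finset.range (n+1)).sup f)

lemma Fmaj_mono (f : ℕ → ℕ) : Monotone (Fmaj f) := by
  intro a b hab
  unfold Fmaj
  exact max_le_max hab (Finset.sup_mono (Finset.range_subset_range.2 (by omega)))

lemma le_Fmaj (f : ℕ → ℕ) (n : ℕ) : n ≤ Fmaj f n := le_max_left _ _

lemma f_le_Fmaj (f : ℕ → ℕ) {j n : ℕ} (h : j ≤ n) : f j ≤ Fmaj f n :=
  le_trans (Finset.le_sup (Finset.mem_range.2 (by omega))) (le_max_right _ _)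

lemma le_iterate_Fmaj (f : ℕ → ℕ) (m n : ℕ) : n ≤ (Fmaj f)^[m] n := by
  induction m generalizing n with
  | zero => simp
  | succ m ih =>
    rw [Function.iterate_succ_apply]
    exact le_trans (le_Fmaj f n) (ih (Fmaj f n))

lemma refines_trans {V : Type*} {k1 k2 k3 : ℕ} {P1 : Fin k1 → Finset V}
    {P2 : Fin k2 → Finset V} {P3 : Fin k3 → Finset V}
    (h12 : Refines P1 P2) (h23 : Refines P2 P3) : Refines P1 P3 := by
  intro j
  obtain ⟨i, hi⟩ := h12 j
  obtain ⟨l, hl⟩ := h23 i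
  exact ⟨l, hi.trans hl⟩

lemma key_lemma {V C : Type*} [Fintype V] [DecidableEq V] [Fintype C] [DecidableEq C]
    (c : V → V → C) (f : ℕ → ℕ) (γ : ℝ) {kP : ℕ} (P : Fin kP → Finset V) :
    ∀ (m : ℕ) (k' : ℕ) (Q : Fin k' → Finset V), IsPartition Q → IsEquipartition' Q →
      Refines Q P → 1 - m * γ < indPart c Q →
      ∃ (k'' : ℕ) (Q'' : Fin k'' → Finset V), k'' ≤ (Fmaj f)^[m] k' ∧
        IsPartition Q'' ∧ IsEquipartition' Q'' ∧ Refines Q'' P ∧ IsRobust c f γ Q'' := by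
  intro m
  induction m with
  | zero =>
    intro k' Q hQ hQe hQr hind
    exfalso
    have := indPart_le_one c Q hQ.1
    simp at hind
    linarith
  | succ m ih =>
    intro k' Q hQ hQe hQr hind
    by_cases hrob : IsRobust c f γ Q
    · exact ⟨k', Q, le_iterate_Fmaj f (m+1) k', hQ, hQe, hQr, hrob⟩
    · unfold IsRobust at hrob
      push_neg at hrob
      obtain ⟨k2, Q2, hQ2, hQ2e, hQ2r, hk2, hind2⟩ := hrob
      have hind2' : 1 - m * γ < indPart c Q2 := by
        push_cast at hind ⊢
        linarith
      obtain ⟨k3, Q3, hk3, hQ3, hQ3e, hQ3r, hQ3rob⟩ :=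
        ih k2 Q2 hQ2 hQ2e (refines_trans hQ2r hQr) hind2'
      refine ⟨k3, Q3, ?_, hQ3, hQ3e, hQ3r, hQ3rob⟩
      calc k3 ≤ (Fmaj f)^[m] k2 := hk3
        _ ≤ (Fmaj f)^[m] (Fmaj f k') := by
            exact Monotone.iterate (Fmaj_mono f) m (le_trans hk2 (f_le_Fmaj f le_rfl))
        _ = (Fmaj f)^[m+1] k' := (Function.iterate_succ_apply (Fmaj f) m k').symm

/-- robust partitioning of colored graphs: for any `k`, `f`, `γ > 0` there is a
bound `T = T(k,f,γ)` such that every equipartition of size `k` of a colored graph has an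
`(f,γ)`-robust refining equipartition of size at most `T`. -/
theorem robust_partition_exists (k : ℕ) (hk : 0 < k) (f : ℕ → ℕ) (γ : ℝ) (hγ : 0 < γ) :
    ∃ T : ℕ, ∀ (V C : Type) [Fintype V] [DecidableEq V] [Fintype C] [DecidableEq C]
      (c : V → V → C) (P : Fin k → Finset V),
      IsPartition P → IsEquipartition' P →
      ∃ (k' : ℕ) (P' : Fin k' → Finset V), k' ≤ T ∧
        IsPartition P' ∧ IsEquipartition' P' ∧ Refines P' P ∧ IsRobust c f γ P' := by
  classical
  set m : ℕ := ⌈1/γ⌉₊ + 1 with hm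
  refine ⟨(Fmaj f)^[m] k, ?_⟩
  intro V C _ _ _ _ c P hP hPe
  have hmγ : 1 - (m : ℝ) * γ < indPart c P := by
    have h1 : (1:ℝ)/γ ≤ (⌈1/γ⌉₊ : ℕ) := Nat.le_ceil _
    have h2 : (1:ℝ) ≤ (⌈1/γ⌉₊ : ℕ) * γ := by
      calc (1:ℝ) = (1/γ) * γ := by field_simp
        _ ≤ (⌈1/γ⌉₊ : ℕ) * γ := by nlinarith
    have h3 : (0:ℝ) ≤ indPart c P := indPart_nonneg c P
    push_cast [hm]
    nlinarith
  obtain ⟨k', P', hk', hP', hP'e, hP'r, hP'rob⟩ :=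
    key_lemma c f γ P m k P hP hPe (fun j => ⟨j, subset_rfl⟩) hmγ
  exact ⟨k', P', hk', hP', hP'e, hP'r, hP'rob⟩
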